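/- Let x₀ > 0 and N ∈ ℕ*. The function η(x) = (2√(x x₀)/(x+x₀)) · Σ_{k=0}^{N−1} ((2k)!/(2^{2k}(k!)²)) ((x−x₀)/(x+x₀))^{2k}, defined for x > 0, satisfies η(x₀)=1 and η^{(k)}(x₀)=0 for 1 ≤ k ≤ 2N−1. -/

import Mathlib

open Finset Polynomial Set
open scoped ContDiff

namespace Stmt4Aux

noncomputable def a (k : ℕ) : ℝ :=
  (Nat.factorial (2 * k) : ℝ) / (2 ^ (2 * k) * (Nat.factorial k : ℝ) ^ 2)

lemma a_pos (k : ℕ) : 0 < a k := by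
  have h1 := Nat.factorial_pos (2 * k)
  have h2 := Nat.factorial_pos k
  apply div_pos
  · exact_mod_cast h1
  · positivity

lemma a_zero : a 0 = 1 := by simp [a]

lemma a_succ (k : ℕ) : (2 * (k : ℝ) + 2) * a (k + 1) = (2 * k + 1) * a k := by
  have hf : ((Nat.factorial k : ℝ)) ≠ 0 := Nat.cast_ne_zero.2 (Nat.factorial_ne_zero k)
  have h2 : ((2:ℝ)) ^ (2 * k) ≠ 0 := by positivity
  unfold a
  rw [show 2 * (k + 1) = (2 * k + 1) + 1 by ring, Nat.factorial_succ, Nat.factorial_succ,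
    Nat.factorial_succ]
  push_cast
  field_simp
  ring

noncomputable def T (n : ℕ) : ℝ := ∑ i ∈ range (n + 1), a i * a (n - i)

lemma W_sym (m : ℕ) :
    2 * (∑ i ∈ range (m + 1), (i : ℝ) * (a i * a (m - i))) = m * T m := by
  rw [two_mul]
  nth_rewrite 2 [← Finset.sum_range_reflect]
  rw [T, ← Finset.sum_add_distrib, Finset.mul_sum]
  apply Finset.sum_congr rfl
  intro j hj
  have hj' : j ≤ m := Nat.lt_succ_iff.mp (Finset.mem_range.mp hj)
  have h1 : m + 1 - 1 - j = m - j := by omega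
  have h2 : m - (m - j) = j := by omega
  rw [h1, h2, Nat.cast_sub hj']
  ring

lemma W_succ (n : ℕ) :
    ∑ i ∈ range (n + 1 + 1), (i : ℝ) * (a i * a (n + 1 - i))
      = (∑ i ∈ range (n + 1), (i : ℝ) * (a i * a (n - i))) + T n / 2 := by
  rw [Finset.sum_range_succ' (fun i => (i : ℝ) * (a i * a (n + 1 - i))) (n + 1)]
  simp only [Nat.cast_zero, zero_mul, add_zero]
  rw [T, Finset.sum_div, ← Finset.sum_add_distrib]
  apply Finset.sum_congr rfl
  intro j hj
  have h1 : n + 1 - (j + 1) = n - j := by omega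
  rw [h1]
  push_cast
  linear_combination (a (n - j) / 2) * a_succ j

lemma T_eq_one (n : ℕ) : T n = 1 := by
  induction n with
  | zero => simp [T, a_zero]
  | succ n ih =>
    have h1 := W_sym (n + 1)
    have h2 := W_sym n
    have h3 := W_succ n
    have key : ((n : ℝ) + 1) * T (n + 1) = ((n : ℝ) + 1) * 1 := by
      push_cast at h1 h2 ⊢
      rw [ih] at h2 h3
      linarith [h1, h2, h3]
    exact mul_left_cancel₀ (by positivity) key


noncomputable def P (N : ℕ) : ℝ[X] := ∑ k ∈ range N, C (a k) * X ^ k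

lemma P_coeff {N j : ℕ} (h : j < N) : (P N).coeff j = a j := by
  rw [P, Polynomial.finset_sum_coeff]
  simp only [Polynomial.coeff_C_mul, Polynomial.coeff_X_pow, mul_ite, mul_one, mul_zero]
  rw [Finset.sum_ite_eq (range N) j (fun k => a k)]
  simp [Finset.mem_range, h]

lemma coeff_Psq {N j : ℕ} (h : j < N) : (P N * P N).coeff j = T j := by
  rw [Polynomial.coeff_mul, Finset.Nat.sum_antidiagonal_eq_sum_range_succ_mk, T]
  apply Finset.sum_congr rfl
  intro i hi
  have hi' : i ≤ j := Nat.lt_succ_iff.mp (mem_range.mp hi)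
  rw [P_coeff (lt_of_le_of_lt hi' h), P_coeff (show j - i < N by omega)]

lemma exists_R (N : ℕ) : ∃ R : ℝ[X], (1 - X) * P N ^ 2 - 1 = X ^ N * R := by
  apply (Polynomial.X_pow_dvd_iff).2
  intro j hj
  rw [sub_mul, one_mul, Polynomial.coeff_sub, Polynomial.coeff_sub, pow_two]
  rcases j with _ | j
  · rw [coeff_Psq hj, T_eq_one]
    simp [Polynomial.mul_coeff_zero]
  · rw [Polynomial.coeff_X_mul, coeff_Psq hj, coeff_Psq (show j < N by omega),
      T_eq_one, T_eq_one]
    simp [Polynomial.coeff_one]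

lemma contDiff_eval (R : ℝ[X]) : ContDiff ℝ (⊤ : ℕ∞) (fun y : ℝ => Polynomial.eval y R) := by
  have h : (fun y : ℝ => Polynomial.eval y R)
      = fun y => ∑ i ∈ range (R.natDegree + 1), R.coeff i * y ^ i := by
    funext y; rw [Polynomial.eval_eq_sum_range]
  rw [h]
  exact ContDiff.sum fun i _ => contDiff_const.mul (contDiff_id.pow i)

lemma eval_P (N : ℕ) (u : ℝ) :
    Polynomial.eval u (P N) = ∑ k ∈ range N, a k * u ^ k := by
  simp [P, Polynomial.eval_finset_sum]


lemma vanish {s : Set ℝ} (hs : IsOpen s) {x₀ : ℝ} (hx₀ : x₀ ∈ s) :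
    ∀ (k m : ℕ), k < m → ∀ g : ℝ → ℝ, ContDiffOn ℝ ∞ g s →
      iteratedDerivWithin k (fun x => (x - x₀) ^ m * g x) s x₀ = 0 := by
  intro k
  induction k with
  | zero =>
    intro m hm g hg
    simp [iteratedDerivWithin_zero, zero_pow (by omega : m ≠ 0)]
  | succ k IH =>
    intro m hm g hg
    obtain ⟨m', rfl⟩ : ∃ m', m = m' + 1 := ⟨m - 1, by omega⟩
    rw [iteratedDerivWithin_succ']
    have hgd : ContDiffOn ℝ ∞ (derivWithin g s) s :=
      hg.derivWithin hs.uniqueDiffOn (by simp)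
    have heq : Set.EqOn (derivWithin (fun x => (x - x₀) ^ (m' + 1) * g x) s)
        (fun x => (x - x₀) ^ m' * (((m' : ℝ) + 1) * g x + (x - x₀) * derivWithin g s x)) s := by
      intro y hy
      have hgy : DifferentiableAt ℝ g y :=
        (hg.differentiableOn (by simp) y hy).differentiableAt (hs.mem_nhds hy)
      have h1 : HasDerivAt (fun x : ℝ => (x - x₀) ^ (m' + 1))
          ((m' + 1 : ℕ) * (y - x₀) ^ m' * 1) y := by
        simpa using ((hasDerivAt_id y).sub_const x₀).fun_pow (m' + 1)
      have h2 : HasDerivAt g (derivWithin g s y) y := by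
        rw [derivWithin_of_isOpen hs hy]; exact hgy.hasDerivAt
      rw [derivWithin_of_isOpen hs hy, (h1.fun_mul h2).deriv]
      push_cast
      ring
    rw [iteratedDerivWithin_congr heq hx₀]
    exact IH m' (by omega) _
      ((contDiffOn_const.mul hg).add
        ((contDiffOn_id.sub contDiffOn_const).mul hgd))

end Stmt4Aux

open Stmt4Aux in
/-- The precertificate for the L²-normalized Laplace kernel takes value 1 at `x₀`
and has vanishing derivatives of orders `1,…,2N-1` there. -/
theorem stmt4 (N : ℕ) (hN : 0 < N) (x₀ : ℝ) (hx₀ : 0 < x₀)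
    (η : ℝ → ℝ)
    (hη : ∀ x, η x = (2 * Real.sqrt (x * x₀) / (x + x₀)) *
      ∑ k ∈ Finset.range N,
        ((Nat.factorial (2 * k) : ℝ) / (2 ^ (2 * k) * (Nat.factorial k : ℝ) ^ 2)) *
          ((x - x₀) / (x + x₀)) ^ (2 * k)) :
    η x₀ = 1 ∧
    ∀ k, 1 ≤ k → k ≤ 2 * N - 1 → iteratedDerivWithin k η (Set.Ioi 0) x₀ = 0 := by
  -- rewrite hη via the polynomial P
  have hη' : ∀ x : ℝ, η x = 2 * Real.sqrt (x * x₀) / (x + x₀) *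
      Polynomial.eval (((x - x₀) / (x + x₀)) ^ 2) (P N) := by
    intro x
    rw [hη x, eval_P]
    congr 1
    apply Finset.sum_congr rfl
    intro k _
    rw [← pow_mul]
    rfl
  have hval : η x₀ = 1 := by
    rw [hη' x₀]
    have hx2 : x₀ + x₀ ≠ 0 := by positivity
    rw [sub_self, zero_div, zero_pow (by norm_num : (2:ℕ) ≠ 0),
      ← Polynomial.coeff_zero_eq_eval_zero, P_coeff hN, a_zero,
      Real.sqrt_mul_self hx₀.le]
    field_simp
    ring
  refine ⟨hval, ?_⟩
  -- setup
  obtain ⟨R, hR⟩ := exists_R N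
  set s : Set ℝ := Set.Ioi (0:ℝ) with hs_def
  have hs : IsOpen s := isOpen_Ioi
  have hx₀s : x₀ ∈ s := hx₀
  have hne : ∀ x ∈ s, x + x₀ ≠ 0 := fun x hx => by
    have : (0:ℝ) < x := hx
    positivity
  -- smoothness of η on s
  have hηs : ContDiffOn ℝ ∞ η s := by
    intro x hx
    have hxpos : (0:ℝ) < x := hx
    have hden : x + x₀ ≠ 0 := hne x hx
    have c1 : ContDiffAt ℝ ∞ (fun x : ℝ => 2 * Real.sqrt (x * x₀)) x :=
      contDiffAt_const.mul ((Real.contDiffAt_sqrt (by positivity)).comp x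
        (contDiffAt_id.mul contDiffAt_const))
    have c2 : ContDiffAt ℝ ∞ (fun x : ℝ => 2 * Real.sqrt (x * x₀) / (x + x₀)) x :=
      c1.div (contDiffAt_id.add contDiffAt_const) hden
    have c3 : ContDiffAt ℝ ∞
        (fun x : ℝ => Polynomial.eval (((x - x₀) / (x + x₀)) ^ 2) (P N)) x :=
      (contDiff_eval (P N)).contDiffAt.comp x
        (((contDiffAt_id.sub contDiffAt_const).div
          (contDiffAt_id.add contDiffAt_const) hden).pow 2)
    exact ((c2.mul c3).congr_of_eventuallyEq
      (Filter.Eventually.of_forall fun y => (hη' y))).contDiffWithinAt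
  -- η nonneg on s
  have hηnn : ∀ x ∈ s, 0 ≤ η x := by
    intro x hx
    have hxpos : (0:ℝ) < x := hx
    rw [hη' x, eval_P]
    apply mul_nonneg
    · apply div_nonneg (by positivity) (by positivity)
    · apply Finset.sum_nonneg
      intro k _
      exact mul_nonneg (a_pos k).le (by positivity)
  have hη1 : ∀ x ∈ s, η x + 1 ≠ 0 := fun x hx => by
    have := hηnn x hx; positivity
  -- the function g
  set g : ℝ → ℝ := fun x => Polynomial.eval (((x - x₀) / (x + x₀)) ^ 2) R /
    ((x + x₀) ^ (2 * N) * (η x + 1)) with hg_def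
  have hgs : ContDiffOn ℝ ∞ g s := by
    apply ContDiffOn.div
    · exact (contDiff_eval R).comp_contDiffOn
        (((contDiffOn_id.sub contDiffOn_const).div
          (contDiffOn_id.add contDiffOn_const) hne).pow 2)
    · exact ((contDiffOn_id.add contDiffOn_const).pow (2 * N)).mul
        (hηs.add contDiffOn_const)
    · exact fun x hx => mul_ne_zero (pow_ne_zero _ (hne x hx)) (hη1 x hx)
  -- key identity
  have key : ∀ x ∈ s, η x = (x - x₀) ^ (2 * N) * g x + 1 := by
    intro x hx
    have hxpos : (0:ℝ) < x := hx
    have hden : x + x₀ ≠ 0 := hne x hx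
    have hc2 : (2 * Real.sqrt (x * x₀) / (x + x₀)) ^ 2
        = 1 - ((x - x₀) / (x + x₀)) ^ 2 := by
      rw [div_pow, mul_pow, Real.sq_sqrt (by positivity : (0:ℝ) ≤ x * x₀), div_pow]
      field_simp
      ring
    have hQ := congrArg (Polynomial.eval (((x - x₀) / (x + x₀)) ^ 2)) hR
    simp only [Polynomial.eval_mul, Polynomial.eval_sub, Polynomial.eval_one,
      Polynomial.eval_pow, Polynomial.eval_X] at hQ
    have hsq : η x ^ 2 - 1 = (x - x₀) ^ (2 * N) *
        Polynomial.eval (((x - x₀) / (x + x₀)) ^ 2) R / (x + x₀) ^ (2 * N) := by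
      rw [hη' x, mul_pow, hc2, hQ, ← pow_mul, div_pow]
      field_simp
    have h4 : (x - x₀) ^ (2 * N) * g x = (η x ^ 2 - 1) / (η x + 1) := by
      rw [hg_def, hsq]
      field_simp
    have h5 : (η x ^ 2 - 1) / (η x + 1) = η x - 1 := by
      rw [div_eq_iff (hη1 x hx)]
      ring
    rw [h4, h5]
    ring
  -- conclusion
  intro k hk1 hk2
  have hkey' : Set.EqOn η (fun x => 1 + (x - x₀) ^ (2 * N) * g x) s := by
    intro x hx
    rw [key x hx]
    ring
  rw [iteratedDerivWithin_congr hkey' hx₀s,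
    iteratedDerivWithin_const_add (by omega : 0 < k) (1:ℝ)]
  exact vanish hs hx₀s k (2 * N) (by omega) g hgs
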